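/- Let T be a singular weighted tree with adjacency matrix A. Then A and A# have the same zero–nonzero pattern if and only if T is a weighted star. -/
import Mathlib


open SimpleGraph

/-- `X` is the group inverse of `A`. -/
def IsGroupInverse {n : Type*} [Fintype n] (A X : Matrix n n ℝ) : Prop :=
  A * X * A = A ∧ X * A * X = X ∧ A * X = X * A

/-- A matching of a graph: a set of pairwise non-incident edges. -/
def IsMatching {V : Type*} (G : SimpleGraph V) (M : Finset (Sym2 V)) : Prop :=
  (↑M : Set (Sym2 V)) ⊆ G.edgeSet ∧
    ∀ e ∈ M, ∀ f ∈ M, e ≠ f → ∀ v : V, ¬(v ∈ e ∧ v ∈ f)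

/-- A maximum matching: a matching of maximum cardinality. -/
def IsMaxMatching {V : Type*} (G : SimpleGraph V) (M : Finset (Sym2 V)) : Prop :=
  IsMatching G M ∧ ∀ N : Finset (Sym2 V), IsMatching G N → N.card ≤ M.card

/-- A nonempty list of edges alternately in and out of `M`,
beginning and ending with edges of `M`. -/
def IsAltEdgeList {V : Type*} (M : Set (Sym2 V)) : List (Sym2 V) → Prop
  | [] => False
  | [e] => e ∈ M
  | e :: f :: rest => e ∈ M ∧ f ∉ M ∧ IsAltEdgeList M rest

/-- A pair of vertices is maximally matchable if they are joined by a path that is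
alternating with respect to some maximum matching. -/
def MaxMatchable {V : Type*} (G : SimpleGraph V) (u v : V) : Prop :=
  ∃ (p : G.Walk u v) (M : Finset (Sym2 V)),
    p.IsPath ∧ IsMaxMatching G M ∧ IsAltEdgeList (↑M) p.edges

/-- `G` is a star: some center `c` is adjacent to exactly the other vertices,
and there are no other edges. -/
def IsStar {V : Type*} (G : SimpleGraph V) : Prop :=
  ∃ c : V, ∀ u v : V, G.Adj u v ↔ ((u = c ∧ v ≠ c) ∨ (v = c ∧ u ≠ c))

/-- The class 𝕋: trees with at least one non-pendant vertex in which every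
non-pendant vertex is adjacent to a pendant vertex. -/
def InClassT {V : Type*} [Fintype V] (T : SimpleGraph V) [DecidableRel T.Adj] : Prop :=
  T.IsTree ∧ (∃ v, T.degree v ≠ 1) ∧
    ∀ v, T.degree v ≠ 1 → ∃ u, T.Adj v u ∧ T.degree u = 1

/-- The number of pendant neighbours of `v`. -/
def pendantNbrs {V : Type*} [Fintype V] [DecidableEq V] (T : SimpleGraph V)
    [DecidableRel T.Adj] (v : V) : ℕ :=
  ((T.neighborFinset v).filter fun u => T.degree u = 1).card


lemma star_of_noP4 {V : Type*} (T : SimpleGraph V) (hT : T.IsTree)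
    (h4 : ∀ i k l j : V, T.Adj i k → T.Adj k l → T.Adj l j → i ≠ l → k ≠ j → i ≠ j → False) :
    IsStar T := by
  have huniq := hT.existsUnique_path
  -- no triangles
  have htri : ∀ u v w : V, T.Adj u v → T.Adj v w → T.Adj u w → False := by
    intro u v w h1 h2 h3
    obtain ⟨p, -, hup⟩ := huniq u w
    have e1 := hup (Walk.cons h3 Walk.nil) (by simp [Walk.cons_isPath_iff, h3.ne])
    have e2 := hup (Walk.cons h1 (Walk.cons h2 Walk.nil))
      (by simp [Walk.cons_isPath_iff, h1.ne, h2.ne, h3.ne])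
    have := congrArg Walk.length (e2.trans e1.symm)
    simp [Walk.length_cons] at this
  -- a vertex with two distinct neighbors is adjacent to all other vertices
  have hcenter : ∀ c a d : V, T.Adj c a → T.Adj c d → a ≠ d → ∀ v, v ≠ c → T.Adj c v := by
    intro c a d hca hcd had v hv
    by_contra hnadj
    obtain ⟨p, hp, -⟩ := huniq c v
    cases p with
    | nil => exact hv rfl
    | @cons _ x _ h1 p1 =>
      cases p1 with
      | nil => exact hnadj h1
      | @cons _ y _ h2' p2 =>
        have hnd := hp.support_nodup
        simp only [Walk.support_cons, List.nodup_cons, List.mem_cons, not_or] at hnd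
        have hcy : c ≠ y := fun h => hnd.1.2 (h ▸ p2.start_mem_support)
        have hncy : ¬ T.Adj c y := fun h => htri c x y h1 h2' h
        have hya : y ≠ a := fun h => hncy (h ▸ hca)
        have hyd : y ≠ d := fun h => hncy (h ▸ hcd)
        by_cases hxa : x = a
        · have hdx : d ≠ x := by rw [hxa]; exact fun h => had h.symm
          exact h4 d c x y hcd.symm h1 h2' hdx hcy hyd.symm
        · exact h4 a c x y hca.symm h1 h2' (fun h => hxa h.symm) hcy hya.symm
  have hstar2 : ∀ c a d : V, T.Adj c a → T.Adj c d → a ≠ d → IsStar T := by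
    intro c a d hca hcd had
    have hc := hcenter c a d hca hcd had
    refine ⟨c, fun u v => ?_⟩
    constructor
    · intro huv
      by_cases hu : u = c
      · exact Or.inl ⟨hu, fun h => T.irrefl (hu ▸ h ▸ huv)⟩
      · by_cases hv : v = c
        · exact Or.inr ⟨hv, hu⟩
        · exact absurd (htri c u v (hc u hu) huv (hc v hv)) (fun h => h)
    · rintro (⟨rfl, hv⟩ | ⟨rfl, hu⟩)
      · exact hc v hv
      · exact (hc u hu).symm
  have hne : Nonempty V := hT.isConnected.nonempty
  by_cases hE : ∃ u v : V, T.Adj u v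
  · obtain ⟨c, d, hcd⟩ := hE
    by_cases h2 : ∃ a, a ≠ d ∧ T.Adj c a
    · obtain ⟨a, had, hca⟩ := h2
      exact hstar2 c a d hca hcd had
    · by_cases h3 : ∃ b, b ≠ c ∧ T.Adj d b
      · obtain ⟨b, hbc, hdb⟩ := h3
        exact hstar2 d b c hdb hcd.symm hbc
      · push_neg at h2 h3
        have honlyc : ∀ a, T.Adj c a → a = d := fun a ha => by
          by_contra h; exact (h2 a h) ha
        have honlyd : ∀ b, T.Adj d b → b = c := fun b hb => by
          by_contra h; exact (h3 b h) hb
        have hV : ∀ v : V, v = c ∨ v = d := by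
          intro v
          obtain ⟨p, hp, -⟩ := huniq c v
          cases p with
          | nil => exact Or.inl rfl
          | @cons _ x _ h1 p1 =>
            have hxd : x = d := honlyc x h1
            subst hxd
            cases p1 with
            | nil => exact Or.inr rfl
            | @cons _ y _ h2' p2 =>
              exfalso
              have hyc : y = c := honlyd y h2'
              have hnd := hp.support_nodup
              simp only [Walk.support_cons, List.nodup_cons, List.mem_cons, not_or] at hnd
              exact hnd.1.2 (hyc ▸ p2.start_mem_support)
        refine ⟨c, fun u v => ?_⟩
        rcases hV u with rfl | rfl <;> rcases hV v with rfl | rfl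
        · simp
        · simp [hcd, hcd.ne']
        · simp [hcd.symm, hcd.ne']
        · simp [hcd.ne']
  · push_neg at hE
    obtain ⟨c⟩ := hne
    have hV : ∀ v : V, v = c := by
      intro v
      obtain ⟨p, hp, -⟩ := huniq c v
      cases p with
      | nil => rfl
      | cons h1 p1 => exact absurd h1 (hE c _)
    exact ⟨c, fun u v => by simp [hE u v, hV u, hV v]⟩

lemma noP4_of_pattern {V : Type*} [Fintype V] [DecidableEq V]
    (T : SimpleGraph V) (hT : T.IsTree)
    (A X : Matrix V V ℝ)
    (hw : ∀ i j, A i j ≠ 0 ↔ T.Adj i j)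
    (hX : IsGroupInverse A X)
    (hpat : ∀ i j, A i j ≠ 0 ↔ X i j ≠ 0) :
    ∀ i k l j : V, T.Adj i k → T.Adj k l → T.Adj l j → i ≠ l → k ≠ j → i ≠ j → False := by
  have huniq := hT.existsUnique_path
  intro i k l j aik akl alj hil hkj hij
  -- i and j are not adjacent
  have hnadj : ¬ T.Adj i j := by
    intro hadj
    obtain ⟨p, -, hup⟩ := huniq i j
    have e1 := hup (Walk.cons hadj Walk.nil) (by simp [Walk.cons_isPath_iff, hadj.ne])
    have e2 := hup (Walk.cons aik (Walk.cons akl (Walk.cons alj Walk.nil)))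
      (by simp [Walk.cons_isPath_iff, aik.ne, akl.ne, alj.ne, hil, hkj, hij])
    have := congrArg Walk.length (e2.trans e1.symm)
    simp [Walk.length_cons] at this
  -- any nonzero term of the expansion of (A*X*A) i j picks out the unique path
  have hterm : ∀ k' l' : V, A i k' * X k' l' * A l' j ≠ 0 → k' = k ∧ l' = l := by
    intro k' l' hne0
    have h1 : A i k' ≠ 0 := left_ne_zero_of_mul (left_ne_zero_of_mul hne0)
    have h2 : X k' l' ≠ 0 := right_ne_zero_of_mul (left_ne_zero_of_mul hne0)
    have h3 : A l' j ≠ 0 := right_ne_zero_of_mul hne0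
    have a1 : T.Adj i k' := (hw _ _).1 h1
    have a2 : T.Adj k' l' := (hw _ _).1 ((hpat _ _).2 h2)
    have a3 : T.Adj l' j := (hw _ _).1 h3
    have hk'j : k' ≠ j := fun h => hnadj (h ▸ a1)
    have hil' : i ≠ l' := fun h => hnadj (h ▸ a3)
    obtain ⟨p, -, hup⟩ := huniq i j
    have e1 := hup (Walk.cons aik (Walk.cons akl (Walk.cons alj Walk.nil)))
      (by simp [Walk.cons_isPath_iff, aik.ne, akl.ne, alj.ne, hil, hkj, hij])
    have e2 := hup (Walk.cons a1 (Walk.cons a2 (Walk.cons a3 Walk.nil)))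
      (by simp [Walk.cons_isPath_iff, a1.ne, a2.ne, a3.ne, hil', hk'j, hij])
    have := congrArg Walk.support (e2.trans e1.symm)
    simp [Walk.support_cons] at this
    exact this
  have hzero : (A * X * A) i j = 0 := by
    rw [hX.1]
    exact not_not.1 (fun h => hnadj ((hw i j).1 h))
  have hexp : (A * X * A) i j = ∑ l' : V, ∑ k' : V, A i k' * X k' l' * A l' j := by
    simp [Matrix.mul_apply, Finset.sum_mul]
  have hval : (∑ l' : V, ∑ k' : V, A i k' * X k' l' * A l' j) = A i k * X k l * A l j := by
    rw [Finset.sum_eq_single l]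
    · rw [Finset.sum_eq_single k]
      · intro b _ hb
        by_contra hne; exact hb (hterm b l hne).1
      · intro h; exact absurd (Finset.mem_univ k) h
    · intro b _ hb
      apply Finset.sum_eq_zero
      intro k' _
      by_contra hne; exact hb (hterm k' b hne).2
    · intro h; exact absurd (Finset.mem_univ l) h
  have : A i k * X k l * A l j ≠ 0 := by
    apply mul_ne_zero (mul_ne_zero ?_ ?_) ?_
    · exact (hw _ _).2 aik
    · exact (hpat _ _).1 ((hw _ _).2 akl)
    · exact (hw _ _).2 alj
  exact this (by rw [← hval, ← hexp, hzero])

lemma pattern_of_star {V : Type*} [Fintype V] [DecidableEq V]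
    (A X : Matrix V V ℝ) (hsym : A.IsSymm)
    (hX : IsGroupInverse A X) (c : V)
    (hz : ∀ p q, A p q ≠ 0 ↔ ((p = c ∧ q ≠ c) ∨ (q = c ∧ p ≠ c))) :
    ∀ i j, A i j ≠ 0 ↔ X i j ≠ 0 := by
  have hz0 : ∀ p q : V, p ≠ c → q ≠ c → A p q = 0 := by
    intro p q hp hq
    by_contra h
    rcases (hz p q).1 h with ⟨h', -⟩ | ⟨h', -⟩
    · exact hp h'
    · exact hq h'
  have hcc : A c c = 0 := by
    by_contra h
    rcases (hz c c).1 h with ⟨-, h'⟩ | ⟨-, h'⟩ <;> exact h' rfl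
  by_cases hex : ∃ v : V, v ≠ c
  · obtain ⟨v₀, hv₀⟩ := hex
    set s : ℝ := ∑ u : V, A c u * A u c with hs_def
    have hterm : ∀ u : V, A c u * A u c = A c u * A c u := fun u => by
      rw [hsym.apply c u]
    have hs_pos : 0 < s := by
      apply Finset.sum_pos'
      · intro u _
        rw [hterm u]; exact mul_self_nonneg _
      · refine ⟨v₀, Finset.mem_univ _, ?_⟩
        rw [hterm v₀]
        have : A c v₀ ≠ 0 := (hz c v₀).2 (Or.inl ⟨rfl, hv₀⟩)
        exact mul_self_pos.2 this
    have hs : s ≠ 0 := ne_of_gt hs_pos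
    -- the key identity A³ = s • A
    have key : A * A * A = s • A := by
      ext i j
      have hexp : (A * A * A) i j = ∑ k : V, ∑ l : V, A i l * A l k * A k j := by
        simp [Matrix.mul_apply, Finset.sum_mul]
      rw [hexp, Matrix.smul_apply, smul_eq_mul]
      by_cases hi : c = i <;> by_cases hj : c = j
      · cases hi; cases hj
        rw [hcc, mul_zero]
        apply Finset.sum_eq_zero
        intro k _
        apply Finset.sum_eq_zero
        intro l _
        rcases eq_or_ne l c with rfl | hl
        · rw [hcc, zero_mul, zero_mul]
        · rcases eq_or_ne k c with rfl | hk
          · rw [hcc, mul_zero]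
          · rw [hz0 l k hl hk, mul_zero, zero_mul]
      · cases hi
        rw [Finset.sum_eq_single c]
        · rw [← Finset.sum_mul, ← hs_def]
        · intro k _ hk
          apply Finset.sum_eq_zero
          intro l _
          rw [hz0 k j hk (Ne.symm hj), mul_zero]
        · intro h; exact absurd (Finset.mem_univ c) h
      · cases hj
        have hinner : ∀ k : V, (∑ l : V, A i l * A l k * A k c) = A i c * (A c k * A k c) := by
          intro k
          rw [Finset.sum_eq_single c]
          · rw [mul_assoc]
          · intro l _ hl
            rw [hz0 i l (Ne.symm hi) hl, zero_mul, zero_mul]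
          · intro h; exact absurd (Finset.mem_univ c) h
        calc (∑ k : V, ∑ l : V, A i l * A l k * A k c)
            = ∑ k : V, A i c * (A c k * A k c) := Finset.sum_congr rfl fun k _ => hinner k
          _ = A i c * s := by rw [← Finset.mul_sum, ← hs_def]
          _ = s * A i c := mul_comm _ _
      · rw [hz0 i j (Ne.symm hi) (Ne.symm hj), mul_zero]
        apply Finset.sum_eq_zero; intro k _
        apply Finset.sum_eq_zero; intro l _
        rcases eq_or_ne c l with hl | hl
        · cases hl
          rcases eq_or_ne c k with hk | hk
          · cases hk; rw [hcc, mul_zero, zero_mul]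
          · rw [hz0 k j (Ne.symm hk) (Ne.symm hj), mul_zero]
        · rw [hz0 i l (Ne.symm hi) (Ne.symm hl), zero_mul, zero_mul]
    -- derive X = s⁻¹ • A from the group-inverse axioms
    obtain ⟨hXa, hXb, hXc⟩ := hX
    have h1 : s • (A * X) = A * A := by
      calc s • (A * X) = (s • A) * X := (smul_mul_assoc s A X).symm
        _ = A * A * A * X := by rw [key]
        _ = A * A * (A * X) := by rw [mul_assoc (A * A) A X]
        _ = A * A * (X * A) := by rw [hXc]
        _ = A * (A * X) * A := by rw [mul_assoc, mul_assoc, mul_assoc]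
        _ = A * (X * A) * A := by rw [hXc]
        _ = A * X * A * A := by rw [← mul_assoc A X A]
        _ = A * A := by rw [hXa]
    have hAX : A * X = s⁻¹ • (A * A) := by
      rw [← h1, smul_smul, inv_mul_cancel₀ hs, one_smul]
    have hXeq : X = s⁻¹ • A := by
      calc X = X * A * X := hXb.symm
        _ = (A * X) * X := by rw [hXc]
        _ = (s⁻¹ • (A * A)) * X := by rw [hAX]
        _ = s⁻¹ • (A * (A * X)) := by rw [smul_mul_assoc, mul_assoc]
        _ = s⁻¹ • (A * (s⁻¹ • (A * A))) := by rw [hAX]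
        _ = s⁻¹ • (s⁻¹ • (A * A * A)) := by rw [mul_smul_comm, mul_assoc]
        _ = s⁻¹ • (s⁻¹ • (s • A)) := by rw [key]
        _ = ((s⁻¹ * s⁻¹) * s) • A := by rw [smul_smul, smul_smul]
        _ = s⁻¹ • A := by rw [mul_assoc, inv_mul_cancel₀ hs, mul_one]
    intro i j
    rw [hXeq, Matrix.smul_apply, smul_eq_mul]
    constructor
    · intro h
      exact mul_ne_zero (inv_ne_zero hs) h
    · intro h
      exact right_ne_zero_of_mul h
  · -- V = {c}: A = 0 and X = 0
    push_neg at hex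
    have hA0 : A = 0 := by
      ext p q
      rw [hex p, hex q, Matrix.zero_apply, hcc]
    have hX0 : X = 0 := by
      have h := hX.2.1
      rw [hA0] at h
      simpa using h.symm
    simp [hA0, hX0]


/-- For a singular weighted tree, A and A# have the same
zero–nonzero pattern if and only if T is a (weighted) star. -/
theorem same_pattern_iff_star {V : Type*} [Fintype V] [DecidableEq V]
    (T : SimpleGraph V) (hT : T.IsTree)
    (A X : Matrix V V ℝ) (hsym : A.IsSymm)
    (hw : ∀ i j, A i j ≠ 0 ↔ T.Adj i j)
    (hsing : A.det = 0) (hX : IsGroupInverse A X) :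
    (∀ i j, A i j ≠ 0 ↔ X i j ≠ 0) ↔ IsStar T := by
  constructor
  · intro hpat
    exact star_of_noP4 T hT (noP4_of_pattern T hT A X hw hX hpat)
  · rintro ⟨c, hc⟩
    exact pattern_of_star A X hsym hX c (fun p q => (hw p q).trans (hc p q))
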